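/- Let K ∈ N, 0 ≤ r ≤ K and M > 2K. Then for every sequence (I_1,...,I_r) ∈ ℐ^{(2)}_r (with pairs {i_1,j_1},...,{i_r,j_r}), every N ≥ 2 and every R > 0, the rewired constraint set is contained in the main constraint set: 𝒞^{rew}_{r,N,R,M}(I⃗) ⊆ 𝒞^{main}_{r,N,R,M}. -/

import Mathlib

open scoped BigOperators
open Filter

noncomputable section
namespace ET

open scoped Classical

/-- indicator of a proposition -/
def ind (p : Prop) : ℝ := if p then 1 else 0

/-- the four nearest-neighbour steps in `ℤ²` -/
def nbrs : Finset (ℤ × ℤ) := {(1,0), (-1,0), (0,1), (0,-1)}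

abbrev Step := {p : ℤ × ℤ // p ∈ nbrs}

/-- `q n x`: the `n`-step transition probability of the simple symmetric random walk
on `ℤ²`, i.e. `4^{-n}` times the number of nearest-neighbour paths of length `n`
from `0` to `x`. -/
def q (n : ℕ) (x : ℤ × ℤ) : ℝ :=
  (Nat.card {f : Fin n → Step // (∑ i, (f i : ℤ × ℤ)) = x} : ℝ) / 4 ^ n

/-- `σ_N(β) = e^{πβ/log N} - 1` -/
def sig (N : ℕ) (β : ℝ) : ℝ := Real.exp (Real.pi * β / Real.log N) - 1

/-- `R_N = Σ_{n=1}^N q_{2n}(0)` -/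
def RR (N : ℕ) : ℝ := ∑ n ∈ Finset.Icc 1 N, q (2 * n) 0

/-- The replica weight `U_N^β(n,x)`. -/
def U (N : ℕ) (β : ℝ) (n : ℕ) (x : ℤ × ℤ) : ℝ :=
  if n = 0 then (if x = 0 then 1 else 0)
  else
    sig N β * q n x ^ 2 +
      ∑' k : ℕ, sig N β ^ (k + 2) *
        ∑' tz : (Fin (k + 1) → ℕ) × (Fin (k + 1) → ℤ × ℤ),
          ind (StrictMono tz.1 ∧ 0 < tz.1 0 ∧ tz.1 (Fin.last k) < n) *
            (q (tz.1 0) (tz.2 0) ^ 2 *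
              (∏ j : Fin k,
                q (tz.1 j.succ - tz.1 j.castSucc) (tz.2 j.succ - tz.2 j.castSucc) ^ 2) *
              q (n - tz.1 (Fin.last k)) (x - tz.2 (Fin.last k)) ^ 2)

/-- `U_N^β(n) = Σ_x U_N^β(n,x)` -/
def Usum (N : ℕ) (β : ℝ) (n : ℕ) : ℝ := ∑' x : ℤ × ℤ, U N β n x

/-- position after `m` steps of the walk encoded by `f` -/
def walkPos {n : ℕ} (f : Fin n → Step) (m : ℕ) : ℤ × ℤ :=
  ∑ i ∈ Finset.univ.filter (fun i : Fin n => (i : ℕ) < m), (f i : ℤ × ℤ)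

/-- collision local time up to time `N` of walks encoded by `f` and `g` -/
def colls (N : ℕ) (f g : Fin N → Step) : ℝ :=
  ∑ m ∈ Finset.Icc 1 N, ind (walkPos f m = walkPos g m)


/-- predecessor index in `Fin r` (truncated at 0) -/
def fpred {r : ℕ} (i : Fin r) : Fin r :=
  ⟨(i : ℕ) - 1, lt_of_le_of_lt (Nat.sub_le _ _) i.isLt⟩

/-- value at the previous index, with the convention that the value at "index 0 - 1"
is `0` -/
def prev {r : ℕ} {α : Type*} [Zero α] (t : Fin r → α) (i : Fin r) : α :=
  if (i : ℕ) = 0 then 0 else t (fpred i)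

end ET

namespace ET

open scoped Classical

/-- partitions of `{1,…,h}` -/
abbrev Pt (h : ℕ) := Finpartition (Finset.univ : Finset (Fin h))

/-- `k` and `l` lie in the same part of the partition `I` -/
def samePart {h : ℕ} (I : Pt h) (k l : Fin h) : Prop := ∃ t ∈ I.parts, k ∈ t ∧ l ∈ t

/-- `x ∼ I` : the vector `x ∈ (ℤ²)^h` is constant on each part of `I` -/
def simRel {h : ℕ} (I : Pt h) (x : Fin h → ℤ × ℤ) : Prop :=
  ∀ k l : Fin h, samePart I k l → x k = x l

/-- the pairs `i < j` lying in a common part of `I` -/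
def pairsOf (h : ℕ) (I : Pt h) : Finset (Fin h × Fin h) :=
  Finset.univ.filter fun p : Fin h × Fin h => p.1 < p.2 ∧ samePart I p.1 p.2

/-- the mixed collision weight `σ_N(I) = Π_{i<j, i∼j} σ_N^{i,j}` -/
def sigI (h N : ℕ) (β : Fin h → Fin h → ℝ) (I : Pt h) : ℝ :=
  ∏ p ∈ pairsOf h I, sig N (β p.1 p.2)

/-- the constrained evolution
`Q_n^{I;J}(x,y) = 1_{x∼I} (Π_i q_n(y^{(i)}-x^{(i)})) 1_{y∼J}` -/
def Qker (h : ℕ) (n : ℕ) (I J : Pt h) (x y : Fin h → ℤ × ℤ) : ℝ :=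
  ind (simRel I x) * (∏ i : Fin h, q n (y i - x i)) * ind (simRel J y)

/-- the replica evolution `𝖴_n^J(x,y)`; for `J` with unique non-singleton part a
pair `{k,l}` the sum below has exactly one term, and equals
`1_{x∼J} 1_{y∼J} U_N^{β_{k,l}}(n, y^{(k)}-x^{(k)}) Π_{i≠k,l} q_n(y^{(i)}-x^{(i)})`. -/
def Uker (h N : ℕ) (β : Fin h → Fin h → ℝ) (J : Pt h) (n : ℕ) (x y : Fin h → ℤ × ℤ) : ℝ :=
  ind (simRel J x) * ind (simRel J y) *
    ∑ p ∈ pairsOf h J,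
      U N (β p.1 p.2) n (y p.1 - x p.1) *
        ∏ i ∈ Finset.univ.filter (fun i : Fin h => i ≠ p.1 ∧ i ≠ p.2), q n (y i - x i)

/-- the combined evolution `P_n^{I;J}` -/
def Pker (h N : ℕ) (β : Fin h → Fin h → ℝ) (n : ℕ) (I J : Pt h) (x y : Fin h → ℤ × ℤ) : ℝ :=
  if J.parts.card = h - 1 then
    ∑ m ∈ Finset.Icc 1 n, ∑' z : Fin h → ℤ × ℤ, Qker h m I J x z * Uker h N β J (n - m) z y
  else Qker h n I J x y

/-- admissible sequences of partitions in the expansion of `M^β_{N,h}`: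
each `I_i` has at least one non-singleton part, and `I_i ≠ I_{i+1}` whenever
`|I_i| = h-1` -/
def seqOKfull (h : ℕ) {r : ℕ} (I : Fin r → Pt h) : Prop :=
  (∀ i : Fin r, (I i).parts.card < h) ∧
    ∀ (j : ℕ) (hj : j + 1 < r),
      (I ⟨j, by omega⟩).parts.card = h - 1 → I ⟨j, by omega⟩ ≠ I ⟨j + 1, hj⟩

/-- the `r`-th term `H_{r,N}` of the chaos expansion \eqref{def:Pexpansion}, with
`I_0 = ∘` the one-part partition, `n_0 = 0`, `x_0 = 0`; `extra` is an additional
constraint on the sequence of partitions (`fun _ => True` gives `H_{r,N}` itself). -/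
def Hgen (h N : ℕ) (β : Fin h → Fin h → ℝ) (r : ℕ)
    (extra : (Fin r → Pt h) → Prop) : ℝ :=
  ∑ I : Fin r → Pt h,
    ind (seqOKfull h I ∧ extra I) *
      ∑' nx : (Fin r → ℕ) × (Fin r → Fin h → ℤ × ℤ),
        ind (StrictMono nx.1 ∧ ∀ i, 1 ≤ nx.1 i ∧ nx.1 i ≤ N) *
          ((∏ i : Fin r, sigI h N β (I i)) *
            ∏ i : Fin r,
              Pker h N β (nx.1 i - prev nx.1 i)
                (if (i : ℕ) = 0 then (⊤ : Pt h) else I (fpred i)) (I i)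
                (prev nx.2 i) (nx.2 i))

/-- `H_{r,N}` -/
def Hterm (h N : ℕ) (β : Fin h → Fin h → ℝ) (r : ℕ) : ℝ := Hgen h N β r fun _ => True

/-- `H^{multi}_{r,N}` : the part of `H_{r,N}` where at least one multiple collision
(three or more walks at the same site) occurs -/
def Hmulti (h N : ℕ) (β : Fin h → Fin h → ℝ) (r : ℕ) : ℝ :=
  Hgen h N β r fun I => ∃ j : Fin r, (I j).parts.card < h - 1

end ET

namespace ET

open scoped Classical

/-- Euclidean norm of a point of `ℤ²` -/
def znorm (v : ℤ × ℤ) : ℝ := Real.sqrt (((v.1 ^ 2 + v.2 ^ 2 : ℤ) : ℝ))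

/-- `ℐ^{(2)}` : sequences of partitions with `|I_j| = h-1` for all `j` and
`I_j ≠ I_{j+1}` -/
def seqOK2 (h : ℕ) {r : ℕ} (I : Fin r → Pt h) : Prop :=
  (∀ j : Fin r, (I j).parts.card = h - 1) ∧
    ∀ (j : ℕ) (hj : j + 1 < r), I ⟨j, by omega⟩ ≠ I ⟨j + 1, hj⟩

/-- the basic constraints of `𝒞_{r,N}`:
`0 =: a_1 ≤ b_1 < a_2 ≤ b_2 < ⋯ < a_r ≤ b_r ≤ N` and `x_1 = 0` -/
def inBase (h N : ℕ) {r : ℕ} (a b : Fin r → ℕ) (x y : Fin r → Fin h → ℤ × ℤ) : Prop :=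
  (∀ i : Fin r, (i : ℕ) = 0 → a i = 0 ∧ x i = 0) ∧
    (∀ i : Fin r, a i ≤ b i) ∧
    (∀ (j : ℕ) (hj : j + 1 < r), b ⟨j, by omega⟩ < a ⟨j + 1, hj⟩) ∧
    (∀ i : Fin r, b i ≤ N)

/-- the diffusivity constraints of `𝒞^{diff}_{r,N,R}` (with `y_0 := 0`, `b_0 := 0`):
`‖y_i - x_i‖_∞ ≤ R √(b_i - a_i)` and `‖x_i - y_{i-1}‖_∞ ≤ R √(a_i - b_{i-1})` -/
def Cdiff (h : ℕ) {r : ℕ} (R : ℝ) (a b : Fin r → ℕ) (x y : Fin r → Fin h → ℤ × ℤ) : Prop :=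
  ∀ i : Fin r,
    (∀ j : Fin h, znorm (y i j - x i j) ≤ R * Real.sqrt ((b i : ℝ) - (a i : ℝ))) ∧
    (∀ j : Fin h, znorm (x i j - prev y i j) ≤ R * Real.sqrt ((a i : ℝ) - ((prev b i : ℕ) : ℝ)))

/-- the scale-separation constraints: `a_{i+1} - b_i > M (b_i - b_{i-1})` -/
def Cgap {r : ℕ} (M : ℝ) (a b : Fin r → ℕ) : Prop :=
  ∀ (j : ℕ) (hj : j + 1 < r),
    ((a ⟨j + 1, hj⟩ : ℝ) - (b ⟨j, Nat.lt_of_succ_lt hj⟩ : ℝ)) >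
      M * ((b ⟨j, Nat.lt_of_succ_lt hj⟩ : ℝ) -
        ((prev b ⟨j, Nat.lt_of_succ_lt hj⟩ : ℕ) : ℝ))

/-- the constraints of `𝒞^{main}_{r,N,R,M}` -/
def Cmain (h : ℕ) {r : ℕ} (R M : ℝ) (a b : Fin r → ℕ) (x y : Fin r → Fin h → ℤ × ℤ) : Prop :=
  Cdiff h R a b x y ∧ Cgap M a b

/-- `H[𝒞]` : the weight
`Σ_{(I_1,…,I_r)∈ℐ^{(2)}} Σ_{(a,b,x,y)∈𝒞} 𝖴^{I_1}_{b_1}(0,y_1)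
Π_{i=2}^r Q^{I_{i-1};I_i}_{a_i-b_{i-1}}(y_{i-1},x_i) 𝖴^{I_i}_{b_i-a_i}(x_i,y_i) σ_N(I_i)`,
where `𝒞 ⊆ 𝒞_{r,N}` is cut out by the additional constraint `C`. -/
def HC (h N : ℕ) (β : Fin h → Fin h → ℝ) (r : ℕ)
    (C : (Fin r → ℕ) → (Fin r → ℕ) → (Fin r → Fin h → ℤ × ℤ) → (Fin r → Fin h → ℤ × ℤ) → Prop) :
    ℝ :=
  ∑ I : Fin r → Pt h,
    ind (seqOK2 h I) *
      ∑' t : (Fin r → ℕ) × (Fin r → ℕ) × (Fin r → Fin h → ℤ × ℤ) × (Fin r → Fin h → ℤ × ℤ),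
        ind (inBase h N t.1 t.2.1 t.2.2.1 t.2.2.2 ∧ C t.1 t.2.1 t.2.2.1 t.2.2.2) *
          ∏ i : Fin r,
            (if (i : ℕ) = 0 then
              Uker h N β (I i) (t.2.1 i - t.1 i) (t.2.2.1 i) (t.2.2.2 i)
            else
              Qker h (t.1 i - t.2.1 (fpred i)) (I (fpred i)) (I i)
                  (t.2.2.2 (fpred i)) (t.2.2.1 i) *
                Uker h N β (I i) (t.2.1 i - t.1 i) (t.2.2.1 i) (t.2.2.2 i) *
                sigI h N β (I i))

/-- `H^{diff}_{r,N,R} = H[𝒞^{diff}_{r,N,R}]` -/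
def Hdiff (h N : ℕ) (β : Fin h → Fin h → ℝ) (r : ℕ) (R : ℝ) : ℝ :=
  HC h N β r fun a b x y => Cdiff h R a b x y

/-- `H^{superdiff}_{r,N,R} = H[𝒞_{r,N} ∖ 𝒞^{diff}_{r,N,R}]` -/
def Hsuper (h N : ℕ) (β : Fin h → Fin h → ℝ) (r : ℕ) (R : ℝ) : ℝ :=
  HC h N β r fun a b x y => ¬ Cdiff h R a b x y

/-- `H^{main}_{r,N,R,M} = H[𝒞^{main}_{r,N,R,M}]` -/
def Hmain (h N : ℕ) (β : Fin h → Fin h → ℝ) (r : ℕ) (R M : ℝ) : ℝ :=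
  HC h N β r fun a b x y => Cmain h R M a b x y

end ET

namespace ET

open scoped Classical

/-- the indices `k < m` with `I_k = I_m` (i.e. with the same colliding pair, since
all partitions in `ℐ^{(2)}` are determined by their unique non-singleton pair) -/
def pSet {h r : ℕ} (I : Fin r → Pt h) (m : Fin r) : Finset (Fin r) :=
  Finset.univ.filter fun k => k < m ∧ I k = I m

/-- `b_{p(m)}` where `p(m) = max{k < m : I_k = I_m}`, with the convention
`b_{p(m)} = 0` if there is no such `k` -/
def pB {h r : ℕ} (I : Fin r → Pt h) (b : Fin r → ℕ) (m : Fin r) : ℕ :=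
  if hp : (pSet I m).Nonempty then b ((pSet I m).max' hp) else 0

/-- `y_{p(m)}`, with the convention `y_{p(m)} = 0` if `p(m) = 0` -/
def pY {h r : ℕ} {α : Type*} [Zero α] (I : Fin r → Pt h) (y : Fin r → α) (m : Fin r) : α :=
  if hp : (pSet I m).Nonempty then y ((pSet I m).max' hp) else 0

/-- the rewired sum `H^{rew}_{r,N,R,M}` -/
def Hrew (h N : ℕ) (β : Fin h → Fin h → ℝ) (r : ℕ) (R M : ℝ) : ℝ :=
  ∑ I : Fin r → Pt h,
    ind (seqOK2 h I) *
      ∑' t : (Fin r → ℕ) × (Fin r → ℕ) × (Fin r → Fin h → ℤ × ℤ) × (Fin r → Fin h → ℤ × ℤ),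
        ind (inBase h N t.1 t.2.1 t.2.2.1 t.2.2.2 ∧ Cmain h R M t.1 t.2.1 t.2.2.1 t.2.2.2) *
          ((∏ k : Fin r,
              ind (simRel (I k) (t.2.2.1 k)) * ind (simRel (I k) (t.2.2.2 k)) *
                ∑ p ∈ pairsOf h (I k),
                  U N (β p.1 p.2) (t.2.1 k - t.1 k) (t.2.2.2 k p.1 - t.2.2.1 k p.1) *
                    ∏ l ∈ Finset.univ.filter (fun l : Fin h => l ≠ p.1 ∧ l ≠ p.2),
                      q (t.2.1 k - t.1 k) (t.2.2.2 k l - t.2.2.1 k l)) *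
            ∏ m : Fin r,
              (if (m : ℕ) = 0 then 1 else
                ∑ p ∈ pairsOf h (I m),
                  sig N (β p.1 p.2) *
                    q (t.1 m - pB I t.2.1 m) (t.2.2.1 m p.1 - pY I t.2.2.2 m p.1) ^ 2 *
                    ∏ l ∈ Finset.univ.filter (fun l : Fin h => l ≠ p.1 ∧ l ≠ p.2),
                      q (t.1 m - t.2.1 (fpred m)) (t.2.2.1 m l - t.2.2.2 (fpred m) l)))

end ET

namespace ET

open scoped Classical

/-- the constraints of the rewired set `𝒞^{rew}_{r,N,R,M}(I⃗)` (besides those of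
`𝒞_{r,N}`): the constraint `‖x_m - y_{m-1}‖_∞ ≤ R√(a_m - b_{m-1})` is replaced, for
`m ≥ 2`, by diffusivity of the non-colliding coordinates with respect to `y_{m-1}`
and of the colliding pair with respect to the pair's previous collision point. -/
def Crew (h : ℕ) {r : ℕ} (I : Fin r → Pt h) (K : ℕ) (R M : ℝ)
    (a b : Fin r → ℕ) (x y : Fin r → Fin h → ℤ × ℤ) : Prop :=
  (∀ i : Fin r, ∀ j : Fin h,
      znorm (y i j - x i j) ≤ R * Real.sqrt ((b i : ℝ) - (a i : ℝ))) ∧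
  (∀ i : Fin r, (i : ℕ) = 0 → ∀ j : Fin h,
      znorm (x i j - prev y i j) ≤ R * Real.sqrt ((a i : ℝ) - ((prev b i : ℕ) : ℝ))) ∧
  (∀ i : Fin r, 1 ≤ (i : ℕ) → ∀ p ∈ pairsOf h (I i),
      (∀ l : Fin h, l ≠ p.1 → l ≠ p.2 →
        znorm (x i l - y (fpred i) l) ≤ R * Real.sqrt ((a i : ℝ) - (b (fpred i) : ℝ))) ∧
      (∀ l : Fin h, l = p.1 ∨ l = p.2 →
        znorm (x i l - pY I y i l) ≤
          R * (Real.sqrt (1 - 1 / M) * (1 - Real.sqrt ((2 * (K : ℝ) - 1) / (M - 1)))) *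
            Real.sqrt ((a i : ℝ) - ((pB I b i : ℕ) : ℝ)))) ∧
  Cgap M a b


/-! ### Auxiliary lemmas for `statement16` -/

/-- the natural additive embedding of `ℤ × ℤ` into `ℂ` -/
def zch : ℤ × ℤ →+ ℂ where
  toFun v := ⟨(v.1 : ℝ), (v.2 : ℝ)⟩
  map_zero' := by simp [Complex.ext_iff]
  map_add' u v := by simp [Complex.ext_iff]

lemma znorm_eq (v : ℤ × ℤ) : znorm v = ‖zch v‖ := by
  rw [znorm, Complex.norm_def, Complex.normSq_apply]
  show _ = Real.sqrt ((v.1:ℝ) * (v.1:ℝ) + (v.2:ℝ)*(v.2:ℝ))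
  push_cast; ring_nf

lemma znorm_sub_le (u v : ℤ × ℤ) : znorm (u - v) ≤ znorm u + znorm v := by
  simp only [znorm_eq, map_sub]
  exact norm_sub_le _ _

lemma znorm_add_le (u v : ℤ × ℤ) : znorm (u + v) ≤ znorm u + znorm v := by
  simp only [znorm_eq, map_add]; exact norm_add_le _ _

lemma znorm_sum_le {s : Finset ℕ} (f : ℕ → ℤ × ℤ) :
    znorm (∑ k ∈ s, f k) ≤ ∑ k ∈ s, znorm (f k) := by
  simp only [znorm_eq, map_sum]
  exact norm_sum_le s fun k => zch (f k)

lemma pairsOf_nonempty {h : ℕ} (J : Pt h) (hJ : J.parts.card < h) :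
    ∃ p, p ∈ pairsOf h J := by
  have hsum : ∑ t ∈ J.parts, t.card = h := by
    simpa using J.sum_card_parts
  by_cases hall : ∀ t ∈ J.parts, t.card = 1
  · rw [Finset.sum_congr rfl hall] at hsum
    simp at hsum; omega
  · push_neg at hall
    obtain ⟨t, ht, hcard⟩ := hall
    have h1 : 1 < t.card := by
      have := Finset.card_pos.2 (J.nonempty_of_mem_parts ht)
      omega
    obtain ⟨u, hu, v, hv, huv⟩ := Finset.one_lt_card.1 h1
    rcases lt_or_gt_of_ne huv with hlt | hlt
    · exact ⟨(u, v), Finset.mem_filter.2 ⟨Finset.mem_univ _, hlt, t, ht, hu, hv⟩⟩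
    · exact ⟨(v, u), Finset.mem_filter.2 ⟨Finset.mem_univ _, hlt, t, ht, hv, hu⟩⟩

lemma sum_sqrt_le (n : ℕ) (g : ℕ → ℝ) (hg : ∀ k ∈ Finset.range n, 0 ≤ g k) :
    ∑ k ∈ Finset.range n, Real.sqrt (g k) ≤
      Real.sqrt n * Real.sqrt (∑ k ∈ Finset.range n, g k) := by
  have hsum : (0:ℝ) ≤ ∑ k ∈ Finset.range n, g k := Finset.sum_nonneg hg
  rw [← Real.sqrt_mul (by positivity)]
  refine (Real.le_sqrt (Finset.sum_nonneg fun k _ => Real.sqrt_nonneg _)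
    (by positivity)).2 ?_
  calc (∑ k ∈ Finset.range n, Real.sqrt (g k)) ^ 2
      ≤ (Finset.range n).card * ∑ k ∈ Finset.range n, Real.sqrt (g k) ^ 2 :=
        sq_sum_le_card_mul_sum_sq
    _ = n * ∑ k ∈ Finset.range n, g k := by
        rw [Finset.card_range]
        congr 1
        exact Finset.sum_congr rfl fun k hk => Real.sq_sqrt (hg k hk)

lemma sqrt_add_sqrt_le {u v : ℝ} (hu : 0 ≤ u) (hv : 0 ≤ v) :
    Real.sqrt u + Real.sqrt v ≤ Real.sqrt 2 * Real.sqrt (u + v) := by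
  rw [← Real.sqrt_mul (by norm_num)]
  refine (Real.le_sqrt (by positivity) (by positivity)).2 ?_
  have h1 : Real.sqrt u ^ 2 = u := Real.sq_sqrt hu
  have h2 : Real.sqrt v ^ 2 = v := Real.sq_sqrt hv
  nlinarith [sq_nonneg (Real.sqrt u - Real.sqrt v)]

lemma geom_sum_le_inv (x : ℝ) (hx0 : 0 ≤ x) (hx1 : x < 1) (n : ℕ) :
    ∑ t ∈ Finset.range n, x ^ t ≤ 1 / (1 - x) := by
  have h1 : (0:ℝ) < 1 - x := by linarith
  rw [geom_sum_eq (x := x) (by linarith) n]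
  have h2 : (x ^ n - 1) / (x - 1) = (1 - x ^ n) / (1 - x) := by
    rw [div_eq_div_iff (by linarith) (by linarith)]; ring
  rw [h2]
  have h3 : 0 ≤ x ^ n := by positivity
  gcongr
  linarith

lemma final_ineq (M : ℝ) (K : ℕ) (hK : 1 ≤ K) (hM : 2 * (K:ℝ) < M)
    (A D : ℝ) (hA : 0 ≤ A) (hD : 0 ≤ D) (hDA : (M - 1) * D ≤ A)
    (n : ℕ) (hn : 2 * (n:ℝ) ≤ 2 * (K:ℝ) - 1) :
    Real.sqrt (1 - 1/M) * (1 - Real.sqrt ((2 * (K:ℝ) - 1)/(M - 1))) * Real.sqrt (A + D)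
      + Real.sqrt 2 * Real.sqrt n * Real.sqrt D ≤ Real.sqrt A := by
  have hK1 : (1:ℝ) ≤ (K:ℝ) := by exact_mod_cast hK
  have hM0 : (0:ℝ) < M := by linarith
  have hMm1 : (0:ℝ) < M - 1 := by linarith
  set t := Real.sqrt ((2 * (K:ℝ) - 1)/(M - 1)) with ht
  have ht0 : 0 ≤ t := Real.sqrt_nonneg _
  have ht1 : t ≤ 1 := by
    rw [ht]
    apply Real.sqrt_le_one.2
    rw [div_le_one hMm1]; linarith
  have step1 : Real.sqrt (1 - 1/M) * Real.sqrt (A + D) ≤ Real.sqrt A := by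
    rw [← Real.sqrt_mul (by rw [sub_nonneg, div_le_one hM0]; linarith)]
    apply Real.sqrt_le_sqrt
    have e1 : A - (1 - 1/M) * (A + D) = (1/M) * (A - (M - 1) * D) := by
      field_simp; ring
    nlinarith [mul_nonneg (by positivity : (0:ℝ) ≤ 1/M) (by linarith : 0 ≤ A - (M-1)*D)]
  have step2 : Real.sqrt 2 * Real.sqrt n * Real.sqrt D ≤ t * Real.sqrt A := by
    rw [← Real.sqrt_mul (by norm_num : (0:ℝ) ≤ 2), ← Real.sqrt_mul (by positivity),
      ht, ← Real.sqrt_mul (div_nonneg (by linarith) hMm1.le)]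
    apply Real.sqrt_le_sqrt
    have hD' : D ≤ A / (M - 1) := (le_div_iff₀ hMm1).2 (by linarith)
    have h2n : 2 * (n:ℝ) * D ≤ (2 * (K:ℝ) - 1) * (A / (M - 1)) :=
      mul_le_mul hn hD' hD (by linarith)
    calc 2 * (n:ℝ) * D ≤ (2 * (K:ℝ) - 1) * (A / (M - 1)) := h2n
      _ = (2 * (K:ℝ) - 1) / (M - 1) * A := by ring
  calc Real.sqrt (1 - 1/M) * (1 - t) * Real.sqrt (A + D)
        + Real.sqrt 2 * Real.sqrt n * Real.sqrt D
      ≤ (1 - t) * Real.sqrt A + t * Real.sqrt A := by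
        refine add_le_add ?_ step2
        rw [mul_comm (Real.sqrt (1 - 1/M)) (1 - t), mul_assoc]
        exact mul_le_mul_of_nonneg_left step1 (by linarith)
    _ = Real.sqrt A := by ring

lemma chain_bound (M R : ℝ) (K : ℕ) (hR : 0 < R) (hM : 2 * (K:ℝ) < M)
    (m P : ℕ) (hm1 : 1 ≤ m) (hPm : P ≤ m) (hmK : m < K)
    (aa bb : ℕ → ℝ) (F X : ℕ → ℤ × ℤ)
    (h1 : ∀ k, k < m → znorm (F (k+1) - X k) ≤ R * Real.sqrt (bb (k+1) - aa k))
    (h2 : ∀ k, k < m → znorm (X k - F k) ≤ R * Real.sqrt (aa k - bb k))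
    (h3 : znorm (X m - F P) ≤
      R * (Real.sqrt (1 - 1/M) * (1 - Real.sqrt ((2 * (K:ℝ) - 1)/(M - 1)))) *
        Real.sqrt (aa m - bb P))
    (h4 : ∀ k, k ≤ m → bb k ≤ aa k)
    (h5 : ∀ k, k < m → aa k ≤ bb (k+1))
    (h6 : ∀ k, k < m → M * (bb (k+1) - bb k) < aa (k+1) - bb (k+1)) :
    znorm (X m - F m) ≤ R * Real.sqrt (aa m - bb m) := by
  have hK1 : 1 ≤ K := by omega
  have hK1' : (1:ℝ) ≤ (K:ℝ) := by exact_mod_cast hK1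
  have hM0 : (0:ℝ) < M := by linarith
  have hM1 : (1:ℝ) < M := by linarith
  have hMm1 : (0:ℝ) < M - 1 := by linarith
  set n := m - P with hn
  have hPn : P + n = m := by omega
  set A := aa m - bb m with hA
  have hA0 : 0 ≤ A := by have := h4 m le_rfl; rw [hA]; linarith
  -- d_k ≥ 0 for k < m
  have hd0 : ∀ k, k < m → 0 ≤ bb (k+1) - bb k := by
    intro k hk
    have := h4 k hk.le
    have := h5 k hk
    linarith
  -- decay estimate
  have hdec : ∀ t, t < m → bb (m - t) - bb (m - t - 1) ≤ A * (1/M) ^ (t+1) := by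
    intro t
    induction t with
    | zero =>
      intro _
      have h := h6 (m-1) (by omega)
      have e1 : m - 1 + 1 = m := by omega
      rw [e1] at h
      have : bb m - bb (m-1) ≤ A / M := by
        rw [le_div_iff₀ hM0, hA]; nlinarith
      simpa [pow_one] using this.trans_eq (by field_simp)
    | succ t ih =>
      intro ht
      have ih' := ih (by omega)
      have h := h6 (m - t - 2) (by omega)
      have e1 : m - t - 2 + 1 = m - t - 1 := by omega
      rw [e1] at h
      have hle : aa (m - t - 1) ≤ bb (m - t) := by
        have := h5 (m - t - 1) (by omega)
        rwa [show m - t - 1 + 1 = m - t from by omega] at this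
      have e2 : m - (t+1) = m - t - 1 := by omega
      have e3 : m - (t+1) - 1 = m - t - 2 := by omega
      rw [e2] at e3 ⊢
      rw [e3]
      have hstep : M * (bb (m - t - 1) - bb (m - t - 2)) ≤ bb (m - t) - bb (m - t - 1) := by
        linarith
      have hrec : bb (m - t - 1) - bb (m - t - 2) ≤ (bb (m - t) - bb (m - t - 1)) / M := by
        rw [le_div_iff₀ hM0]; linarith
      calc bb (m - t - 1) - bb (m - t - 2) ≤ (bb (m - t) - bb (m - t - 1)) / M := hrec
        _ ≤ (A * (1/M) ^ (t+1)) / M := by gcongr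
        _ = A * (1/M) ^ (t+2) := by
            rw [pow_succ _ (t+1), div_eq_iff hM0.ne']
            field_simp
  -- telescoping sum for bb
  have hbbtel : ∑ k ∈ Finset.range n, (bb (P+k+1) - bb (P+k)) = bb m - bb P := by
    have h := Finset.sum_range_sub (fun k => bb (P+k)) n
    simp only [Nat.add_zero] at h
    rw [hPn] at h
    simpa [add_assoc] using h
  set D := bb m - bb P with hD
  have hD0 : 0 ≤ D := by
    rw [← hbbtel]
    apply Finset.sum_nonneg
    intro k hk
    simp only [Finset.mem_range] at hk
    exact hd0 (P+k) (by omega)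
  have hDA : (M - 1) * D ≤ A := by
    have hsum2 : D = ∑ t ∈ Finset.range n, (bb (m - t) - bb (m - t - 1)) := by
      rw [← hbbtel, ← Finset.sum_range_reflect (fun t => bb (m - t) - bb (m - t - 1)) n]
      apply Finset.sum_congr rfl
      intro k hk
      simp only [Finset.mem_range] at hk
      congr 2 <;> omega
    have hb : D ≤ ∑ t ∈ Finset.range n, A * (1/M) ^ (t+1) := by
      rw [hsum2]
      exact Finset.sum_le_sum fun t ht => hdec t
        (by simp only [Finset.mem_range] at ht; omega)
    have hg : ∑ t ∈ Finset.range n, A * (1/M) ^ (t+1)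
        = A * (1/M) * ∑ t ∈ Finset.range n, (1/M) ^ t := by
      rw [Finset.mul_sum]
      apply Finset.sum_congr rfl
      intro t _
      rw [pow_succ]; ring
    have hgs : ∑ t ∈ Finset.range n, (1/M) ^ t ≤ 1/(1 - 1/M) :=
      geom_sum_le_inv _ (by positivity) (by rw [div_lt_one hM0]; linarith) n
    have hb2 : D ≤ A * (1/M) * (1/(1 - 1/M)) := by
      refine hb.trans ?_
      rw [hg]
      exact mul_le_mul_of_nonneg_left hgs (by positivity)
    have he : A * (1/M) * (1/(1 - 1/M)) = A / (M - 1) := by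
      have h1 : (1:ℝ) - 1/M ≠ 0 := by
        have : (1:ℝ) - 1/M = (M-1)/M := by field_simp
        rw [this]
        positivity
      field_simp
    rw [he] at hb2
    calc (M - 1) * D ≤ (M - 1) * (A / (M - 1)) :=
          mul_le_mul_of_nonneg_left hb2 hMm1.le
      _ = A := by field_simp
  -- norm chain
  have key1 : znorm (X m - F m) ≤ znorm (X m - F P) + znorm (F m - F P) := by
    have e : X m - F m = (X m - F P) - (F m - F P) := by ring
    rw [e]; exact znorm_sub_le _ _
  have hFtel : F m - F P = ∑ k ∈ Finset.range n, (F (P+k+1) - F (P+k)) := by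
    have h := Finset.sum_range_sub (fun k => F (P+k)) n
    simp only [Nat.add_zero] at h
    rw [hPn] at h
    simpa [add_assoc] using h.symm
  have key2 : znorm (F m - F P) ≤ R * ∑ k ∈ Finset.range n,
      (Real.sqrt (bb (P+k+1) - aa (P+k)) + Real.sqrt (aa (P+k) - bb (P+k))) := by
    rw [hFtel]
    refine (znorm_sum_le _).trans ?_
    rw [Finset.mul_sum]
    apply Finset.sum_le_sum
    intro k hk
    have hkm : P + k < m := by simp only [Finset.mem_range] at hk; omega
    have e : F (P+k+1) - F (P+k) = (F (P+k+1) - X (P+k)) + (X (P+k) - F (P+k)) := by ring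
    rw [e]
    refine (znorm_add_le _ _).trans ?_
    rw [mul_add]
    exact add_le_add (h1 (P+k) hkm) (h2 (P+k) hkm)
  -- Cauchy–Schwarz
  have hU0 : ∀ k ∈ Finset.range n, 0 ≤ bb (P+k+1) - aa (P+k) := by
    intro k hk
    simp only [Finset.mem_range] at hk
    have := h5 (P+k) (by omega)
    linarith
  have hV0 : ∀ k ∈ Finset.range n, 0 ≤ aa (P+k) - bb (P+k) := by
    intro k hk
    simp only [Finset.mem_range] at hk
    have := h4 (P+k) (by omega)
    linarith
  have key3 : ∑ k ∈ Finset.range n,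
      (Real.sqrt (bb (P+k+1) - aa (P+k)) + Real.sqrt (aa (P+k) - bb (P+k)))
      ≤ Real.sqrt 2 * Real.sqrt n * Real.sqrt D := by
    rw [Finset.sum_add_distrib]
    set U := ∑ k ∈ Finset.range n, (bb (P+k+1) - aa (P+k)) with hU
    set V := ∑ k ∈ Finset.range n, (aa (P+k) - bb (P+k)) with hV
    have hUn : 0 ≤ U := Finset.sum_nonneg hU0
    have hVn : 0 ≤ V := Finset.sum_nonneg hV0
    have hUV : U + V = D := by
      rw [hU, hV, ← Finset.sum_add_distrib, ← hbbtel]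
      apply Finset.sum_congr rfl
      intro k _
      ring
    calc (∑ k ∈ Finset.range n, Real.sqrt (bb (P+k+1) - aa (P+k)))
          + ∑ k ∈ Finset.range n, Real.sqrt (aa (P+k) - bb (P+k))
        ≤ Real.sqrt n * Real.sqrt U + Real.sqrt n * Real.sqrt V :=
          add_le_add (sum_sqrt_le n _ hU0) (sum_sqrt_le n _ hV0)
      _ = Real.sqrt n * (Real.sqrt U + Real.sqrt V) := by ring
      _ ≤ Real.sqrt n * (Real.sqrt 2 * Real.sqrt (U + V)) :=
          mul_le_mul_of_nonneg_left (sqrt_add_sqrt_le hUn hVn) (Real.sqrt_nonneg _)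
      _ = Real.sqrt 2 * Real.sqrt n * Real.sqrt D := by rw [hUV]; ring
  -- combine
  have h3' : znorm (X m - F P) ≤
      R * (Real.sqrt (1 - 1/M) * (1 - Real.sqrt ((2 * (K:ℝ) - 1)/(M - 1)))) *
        Real.sqrt (A + D) := by
    have e : aa m - bb P = A + D := by rw [hA, hD]; ring
    rw [← e]; exact h3
  have hn2K : 2 * (n:ℝ) ≤ 2 * (K:ℝ) - 1 := by
    have hnK : n + 1 ≤ K := by omega
    have : (n:ℝ) + 1 ≤ (K:ℝ) := by exact_mod_cast hnK
    linarith
  have hfin := final_ineq M K hK1 hM A D hA0 hD0 hDA n hn2K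
  calc znorm (X m - F m) ≤ znorm (X m - F P) + znorm (F m - F P) := key1
    _ ≤ R * (Real.sqrt (1 - 1/M) * (1 - Real.sqrt ((2 * (K:ℝ) - 1)/(M - 1)))) *
          Real.sqrt (A + D)
        + R * (Real.sqrt 2 * Real.sqrt n * Real.sqrt D) := by
        refine add_le_add h3' (key2.trans ?_)
        exact mul_le_mul_of_nonneg_left key3 hR.le
    _ ≤ R * Real.sqrt A := by
        have := mul_le_mul_of_nonneg_left hfin hR.le
        calc R * (Real.sqrt (1 - 1/M) * (1 - Real.sqrt ((2 * (K:ℝ) - 1)/(M - 1)))) *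
              Real.sqrt (A + D) + R * (Real.sqrt 2 * Real.sqrt n * Real.sqrt D)
            = R * (Real.sqrt (1 - 1/M) * (1 - Real.sqrt ((2 * (K:ℝ) - 1)/(M - 1))) *
              Real.sqrt (A + D) + Real.sqrt 2 * Real.sqrt n * Real.sqrt D) := by ring
          _ ≤ R * Real.sqrt A := this
    _ = R * Real.sqrt (aa m - bb m) := by rw [hA]

/-- extension of `a` to `ℕ`, as a real-valued sequence -/
noncomputable def extA {r : ℕ} (a : Fin r → ℕ) : ℕ → ℝ :=
  fun k => if hk : k < r then ((a ⟨k, hk⟩ : ℕ) : ℝ) else 0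

/-- extension of the shifted sequence `b_{t-1}` (with `b_{-1} = 0`) to `ℕ` -/
noncomputable def extB {r : ℕ} (b : Fin r → ℕ) : ℕ → ℝ :=
  fun t => if ht : 0 < t ∧ t ≤ r then ((b ⟨t - 1, by omega⟩ : ℕ) : ℝ) else 0

/-- extension of `x` to `ℕ` -/
def extX {r : ℕ} {α : Type*} [Zero α] (x : Fin r → α) : ℕ → α :=
  fun k => if hk : k < r then x ⟨k, hk⟩ else 0

/-- extension of the shifted sequence `y_{t-1}` (with `y_{-1} = 0`) to `ℕ` -/
def extF {r : ℕ} {α : Type*} [Zero α] (y : Fin r → α) : ℕ → α :=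
  fun t => if ht : 0 < t ∧ t ≤ r then y ⟨t - 1, by omega⟩ else 0

lemma extA_eq {r : ℕ} (a : Fin r → ℕ) (k : ℕ) (hk : k < r) :
    extA a k = ((a ⟨k, hk⟩ : ℕ) : ℝ) := dif_pos hk

lemma extB_eq {r : ℕ} (b : Fin r → ℕ) (t : ℕ) (h1 : 0 < t) (h2 : t ≤ r) :
    extB b t = ((b ⟨t - 1, by omega⟩ : ℕ) : ℝ) := dif_pos ⟨h1, h2⟩

lemma extB_zero {r : ℕ} (b : Fin r → ℕ) : extB b 0 = 0 := dif_neg (by omega)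

lemma extX_eq {r : ℕ} {α : Type*} [Zero α] (x : Fin r → α) (k : ℕ) (hk : k < r) :
    extX x k = x ⟨k, hk⟩ := dif_pos hk

lemma extF_eq {r : ℕ} {α : Type*} [Zero α] (y : Fin r → α) (t : ℕ) (h1 : 0 < t) (h2 : t ≤ r) :
    extF y t = y ⟨t - 1, by omega⟩ := dif_pos ⟨h1, h2⟩

lemma extF_zero {r : ℕ} {α : Type*} [Zero α] (y : Fin r → α) : extF y 0 = 0 :=
  dif_neg (by omega)

lemma prev_eq_extF {r : ℕ} {α : Type*} [Zero α] (y : Fin r → α) (i : Fin r) :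
    prev y i = extF y (i : ℕ) := by
  unfold prev extF fpred
  by_cases h0 : (i : ℕ) = 0
  · rw [if_pos h0, dif_neg (by omega)]
  · rw [if_neg h0, dif_pos ⟨by omega, le_of_lt i.isLt⟩]

lemma prev_apply {r h : ℕ} (y : Fin r → Fin h → ℤ × ℤ) (i : Fin r) (j : Fin h) :
    prev y i j = prev (fun k => y k j) i := by
  unfold prev
  by_cases h0 : (i : ℕ) = 0
  · rw [if_pos h0, if_pos h0]; rfl
  · rw [if_neg h0, if_neg h0]

lemma pY_apply {h r : ℕ} (I : Fin r → Pt h) (y : Fin r → Fin h → ℤ × ℤ) (i : Fin r)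
    (j : Fin h) : pY I y i j = pY I (fun k => y k j) i := by
  unfold pY
  by_cases hp : (pSet I i).Nonempty
  · rw [dif_pos hp, dif_pos hp]
  · rw [dif_neg hp, dif_neg hp]; rfl

lemma prevb_cast {r : ℕ} (b : Fin r → ℕ) (i : Fin r) :
    ((prev b i : ℕ) : ℝ) = extB b ((i : ℕ)) := by
  rw [prev_eq_extF]
  unfold extF extB
  by_cases h0 : (i : ℕ) = 0
  · rw [dif_neg (by omega), dif_neg (by omega)]
    simp
  · rw [dif_pos ⟨by omega, le_of_lt i.isLt⟩, dif_pos ⟨by omega, le_of_lt i.isLt⟩]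

/-- **The rewired constraint set is contained in the main one:** for `0 ≤ r ≤ K` and
`M > 2K`, every tuple of `𝒞_{r,N}` satisfying the rewired constraints satisfies the
constraints of `𝒞^{main}_{r,N,R,M}`. -/
theorem statement16 (h : ℕ) (hh : 2 ≤ h)
    (K : ℕ) (r : ℕ) (hr : r ≤ K) (M : ℝ) (hM : 2 * (K : ℝ) < M)
    (I : Fin r → Pt h) (hI : seqOK2 h I)
    (N : ℕ) (hN : 2 ≤ N) (R : ℝ) (hR : 0 < R) :
    ∀ (a b : Fin r → ℕ) (x y : Fin r → Fin h → ℤ × ℤ),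
      inBase h N a b x y → Crew h I K R M a b x y →
      inBase h N a b x y ∧ Cmain h R M a b x y := by
  intro a b x y hBase hRew
  obtain ⟨hn1, hn0, hnp, hgap⟩ := hRew
  have hBab := hBase.2.1
  have hBba := hBase.2.2.1
  refine ⟨hBase, ?_, hgap⟩
  have key : ∀ m : ℕ, ∀ i : Fin r, (i : ℕ) = m → ∀ j : Fin h,
      znorm (x i j - prev y i j) ≤ R * Real.sqrt ((a i : ℝ) - ((prev b i : ℕ) : ℝ)) := by
    intro m
    induction m using Nat.strong_induction_on with
    | _ m IH =>
    intro i him j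
    subst him
    by_cases h0 : (i : ℕ) = 0
    · exact hn0 i h0 j
    have hm1 : 1 ≤ (i : ℕ) := by omega
    have hir : (i : ℕ) < r := i.isLt
    have hcard : (I i).parts.card < h := by
      rw [hI.1 i]; omega
    obtain ⟨p, hp⟩ := pairsOf_nonempty (I i) hcard
    have hXi : ∀ i' : Fin r, extX (fun k => x k j) ((i' : ℕ)) = x i' j := by
      intro i'
      rw [extX_eq _ _ i'.isLt]
    have hAi : ∀ i' : Fin r, extA a ((i' : ℕ)) = (a i' : ℝ) := by
      intro i'
      rw [extA_eq a _ i'.isLt]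
    by_cases hj : j = p.1 ∨ j = p.2
    · -- colliding coordinate: chain argument
      have hres := (hnp i hm1 p hp).2 j hj
      obtain ⟨P, hPm, hPB, hPY⟩ : ∃ P : ℕ, P ≤ (i : ℕ) ∧
          ((pB I b i : ℕ) : ℝ) = extB b P ∧
          pY I (fun k => y k j) i = extF (fun k => y k j) P := by
        by_cases hps : (pSet I i).Nonempty
        · have hk0mem : (pSet I i).max' hps ∈ pSet I i := Finset.max'_mem _ _
          have hk0lt : (((pSet I i).max' hps : Fin r) : ℕ) < (i : ℕ) :=
            (Finset.mem_filter.1 hk0mem).2.1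
          refine ⟨(((pSet I i).max' hps : Fin r) : ℕ) + 1, by omega, ?_, ?_⟩
          · unfold pB
            rw [dif_pos hps, extB_eq b _ (Nat.succ_pos _) (by omega)]
            refine congrArg (fun t : Fin r => ((b t : ℕ) : ℝ)) (Fin.ext ?_)
            simp
          · unfold pY
            rw [dif_pos hps, extF_eq _ _ (Nat.succ_pos _) (by omega)]
            refine congrArg (fun t : Fin r => y t j) (Fin.ext ?_)
            simp
        · refine ⟨0, Nat.zero_le _, ?_, ?_⟩
          · unfold pB
            rw [dif_neg hps, extB_zero]
            simp
          · unfold pY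
            rw [dif_neg hps, extF_zero]
      rw [show (a i : ℝ) = extA a ((i : ℕ)) from (hAi i).symm,
        show ((prev b i : ℕ) : ℝ) = extB b ((i : ℕ)) from prevb_cast b i,
        show prev y i j = extF (fun k => y k j) ((i : ℕ)) from by
          rw [prev_apply, prev_eq_extF],
        show x i j = extX (fun k => x k j) ((i : ℕ)) from (hXi i).symm]
      apply chain_bound M R K hR hM ((i : ℕ)) P hm1 hPm (by omega)
        (extA a) (extB b) (extF (fun k => y k j)) (extX (fun k => x k j))
      · -- h1 : y_k - x_k diffusive
        intro k hk
        have hkr : k < r := by omega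
        rw [extF_eq _ _ (Nat.succ_pos _) (by omega), extX_eq _ _ hkr,
          extB_eq b _ (Nat.succ_pos _) (by omega), extA_eq a _ hkr]
        exact hn1 ⟨k, hkr⟩ j
      · -- h2 : induction hypothesis
        intro k hk
        have hkr : k < r := by omega
        have hIH := IH k hk ⟨k, hkr⟩ rfl j
        rw [show prev y ⟨k, hkr⟩ j = prev (fun k' => y k' j) ⟨k, hkr⟩ from
            prev_apply y ⟨k, hkr⟩ j,
          prev_eq_extF (fun k' => y k' j) ⟨k, hkr⟩,
          prevb_cast b ⟨k, hkr⟩] at hIH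
        rw [extX_eq _ _ hkr, extA_eq a _ hkr]
        exact hIH
      · -- h3 : the rewired constraint
        rw [pY_apply, hPY] at hres
        rw [hPB] at hres
        rw [show (a i : ℝ) = extA a ((i : ℕ)) from (hAi i).symm,
          show x i j = extX (fun k => x k j) ((i : ℕ)) from (hXi i).symm] at hres
        exact hres
      · -- h4 : bb ≤ aa
        intro k hk
        by_cases hk0 : k = 0
        · subst hk0
          rw [extB_zero, extA_eq a 0 (by omega)]
          positivity
        · rw [extB_eq b k (by omega) (by omega), extA_eq a k (by omega)]
          have hlt := hBba (k - 1) (by omega : k - 1 + 1 < r)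
          have e : a ⟨k - 1 + 1, by omega⟩ = a ⟨k, by omega⟩ :=
            congrArg a (Fin.ext (by simp; omega))
          rw [e] at hlt
          exact_mod_cast hlt.le
      · -- h5 : aa ≤ bb next
        intro k hk
        rw [extA_eq a k (by omega), extB_eq b (k + 1) (by omega) (by omega)]
        exact_mod_cast hBab ⟨k, by omega⟩
      · -- h6 : the gap condition
        intro k hk
        have hgk := hgap k (by omega : k + 1 < r)
        rw [prevb_cast b _] at hgk
        rw [extB_eq b (k + 1) (by omega) (by omega), extA_eq a (k + 1) (by omega)]
        simp only [Nat.add_sub_cancel] at *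
        linarith
    · -- non-colliding coordinate
      push_neg at hj
      have hres := (hnp i hm1 p hp).1 j hj.1 hj.2
      have e1 : prev y i j = y (fpred i) j := by
        unfold prev
        rw [if_neg h0]
      have e2 : prev b i = b (fpred i) := by
        unfold prev
        rw [if_neg h0]
      rw [e1, e2]
      exact hres
  intro i
  exact ⟨hn1 i, fun j => key ((i : ℕ)) i rfl j⟩


end ET
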